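/- Let G be a finite group, x a q-element and y an r-element for distinct primes q and r, such that x and y commute and neither is central. Then the conjugacy classes x^G, y^G, and (xy)^G are pairwise distinct, the sizes of x^G and y^G both divide the size of (xy)^G, and xy is p-regular for any prime p different from q and r. -/

import Mathlib

theorem conj_classes_of_commuting_prime_power_elements (G : Type*) [Group G] [Finite G]
    (q r : ℕ) (hq : q.Prime) (hr : r.Prime) (hqr : q ≠ r) (x y : G)
    (hx : ∃ n : ℕ, orderOf x = q ^ n) (hy : ∃ m : ℕ, orderOf y = r ^ m)
    (hc : Commute x y)
    (hxnc : x ∉ Subgroup.center G) (hync : y ∉ Subgroup.center G) :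
    (¬ IsConj x y ∧ ¬ IsConj x (x * y) ∧ ¬ IsConj y (x * y)) ∧
    Nat.card {z : G | IsConj x z} ∣ Nat.card {z : G | IsConj (x * y) z} ∧
    Nat.card {z : G | IsConj y z} ∣ Nat.card {z : G | IsConj (x * y) z} ∧
    ∀ p : ℕ, p.Prime → p ≠ q → p ≠ r → ¬ p ∣ orderOf (x * y) := by
  obtain ⟨n, hxn⟩ := hx
  obtain ⟨m, hym⟩ := hy
  have hx1 : x ≠ 1 := fun h => hxnc (h ▸ Subgroup.one_mem _)
  have hy1 : y ≠ 1 := fun h => hync (h ▸ Subgroup.one_mem _)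
  have hxo : orderOf x ≠ 1 := fun h => hx1 (orderOf_eq_one_iff.mp h)
  have hyo : orderOf y ≠ 1 := fun h => hy1 (orderOf_eq_one_iff.mp h)
  have hqx : q ∣ orderOf x := by
    rw [hxn]; rcases Nat.eq_zero_or_pos n with h | h
    · exact absurd (by simp [h, hxn] : orderOf x = 1) hxo
    · exact dvd_pow_self q h.ne'
  have hry : r ∣ orderOf y := by
    rw [hym]; rcases Nat.eq_zero_or_pos m with h | h
    · exact absurd (by simp [h, hym] : orderOf y = 1) hyo
    · exact dvd_pow_self r h.ne'
  have hco : (orderOf x).Coprime (orderOf y) := by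
    rw [hxn, hym]
    exact Nat.Coprime.pow _ _ ((Nat.coprime_primes hq hr).mpr hqr)
  have horder : orderOf (x * y) = orderOf x * orderOf y :=
    hc.orderOf_mul_eq_mul_orderOf_of_coprime hco
  -- x and y are powers of x*y
  have key : ∀ a b : G, Commute a b → (orderOf b).Coprime (orderOf a) →
      a ∈ Subgroup.zpowers (a * b) := by
    intro a b hab hcop
    obtain ⟨k, hk⟩ := exists_pow_eq_self_of_coprime hcop
    have : (a * b) ^ (orderOf b * k) = a := by
      rw [pow_mul, hab.mul_pow, pow_orderOf_eq_one, mul_one, hk]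
    exact ⟨(orderOf b * k : ℕ), by push_cast [this]; exact_mod_cast this⟩
  have hxz : x ∈ Subgroup.zpowers (x * y) := key x y hc hco.symm
  have hyz : y ∈ Subgroup.zpowers (x * y) := by
    rw [hc.eq]; exact key y x hc.symm hco
  -- cardinality of conjugacy class
  have card_eq : ∀ a : G, Nat.card {z : G | IsConj a z} =
      (MulAction.stabilizer (ConjAct G) a).index := by
    intro a
    have hset : {z : G | IsConj a z} = MulAction.orbit (ConjAct G) a := by
      ext z
      rw [Set.mem_setOf_eq, isConj_comm]
      exact ConjAct.mem_orbit_conjAct.symm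
    rw [hset, Subgroup.index]
    exact Nat.card_congr (MulAction.orbitEquivQuotientStabilizer (ConjAct G) a)
  have dvd_of_mem : ∀ a : G, a ∈ Subgroup.zpowers (x * y) →
      Nat.card {z : G | IsConj a z} ∣ Nat.card {z : G | IsConj (x * y) z} := by
    intro a ha
    rw [card_eq, card_eq]
    apply Subgroup.index_dvd_of_le
    rw [ConjAct.stabilizer_eq_centralizer, ConjAct.stabilizer_eq_centralizer]
    intro g hg
    have : ConjAct.toConjAct a ∈ Subgroup.zpowers (ConjAct.toConjAct (x * y)) := by
      obtain ⟨k, hk⟩ := ha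
      simp only at hk
      exact ⟨k, by simp only []; rw [← hk, map_zpow]⟩
    rw [Subgroup.mem_centralizer_iff] at hg ⊢
    intro h' hh'
    rw [Set.mem_singleton_iff] at hh'
    rw [hh']
    obtain ⟨k, hk⟩ := this
    simp only at hk
    rw [← hk]
    exact Commute.zpow_left (hg _ rfl) k
  refine ⟨⟨?_, ?_, ?_⟩, dvd_of_mem x hxz, dvd_of_mem y hyz, ?_⟩
  · intro h
    obtain ⟨c, hcj⟩ := h
    have := hcj.orderOf_eq
    rw [hxn, hym] at this
    have hq' : q ∣ r ^ m := this ▸ (hxn ▸ hqx)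
    exact hqr ((Nat.prime_dvd_prime_iff_eq hq hr).mp (hq.dvd_of_dvd_pow hq'))
  · intro h
    obtain ⟨c, hcj⟩ := h
    have := hcj.orderOf_eq
    rw [horder] at this
    have hpos : 0 < orderOf x := orderOf_pos x
    have h1 : orderOf x * 1 = orderOf x * orderOf y := by rw [mul_one, ← this]
    exact hyo (Nat.eq_of_mul_eq_mul_left hpos h1).symm
  · intro h
    obtain ⟨c, hcj⟩ := h
    have := hcj.orderOf_eq
    rw [horder] at this
    have hpos : 0 < orderOf y := orderOf_pos y
    have h1 : orderOf y * 1 = orderOf y * orderOf x := by rw [mul_one, mul_comm, ← this]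
    exact hxo (Nat.eq_of_mul_eq_mul_left hpos h1).symm
  · intro p hp hpq hpr hdvd
    rw [horder, hxn, hym] at hdvd
    rcases hp.dvd_mul.mp hdvd with h | h
    · exact hpq ((Nat.prime_dvd_prime_iff_eq hp hq).mp (hp.dvd_of_dvd_pow h))
    · exact hpr ((Nat.prime_dvd_prime_iff_eq hp hr).mp (hp.dvd_of_dvd_pow h))
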